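/- arXiv:1510.08970 — 2 statements merged into one kernel-verified Lean document; each statement's English description precedes it below -/
import Mathlib

section
/- LTL(□,◇) and rLTL(□·,◇·) are equally expressive; in particular, for every rLTL(□·,◇·) formula φ over 𝒫 and every j ∈ {1,2,3,4} there exists an LTL(□,◇) formula ψ over 𝒫 such that for every infinite word σ over 2^𝒫 the j-th component of V(σ,φ) equals W(σ,ψ). -/
/-- Truth values as 4-tuples of Booleans. -/
abbrev TV := Bool × Bool × Bool × Bool

def ttop : TV := (true, true, true, true)
def tbot : TV := (false, false, false, false)

/-- Componentwise order on 4-tuples. -/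
def tle (a b : TV) : Prop :=
  a.1 ≤ b.1 ∧ a.2.1 ≤ b.2.1 ∧ a.2.2.1 ≤ b.2.2.1 ∧ a.2.2.2 ≤ b.2.2.2

instance : DecidableRel tle := fun a b =>
  decidable_of_iff (a.1 ≤ b.1 ∧ a.2.1 ≤ b.2.1 ∧ a.2.2.1 ≤ b.2.2.1 ∧ a.2.2.2 ≤ b.2.2.2) Iff.rfl

def tmeet (a b : TV) : TV :=
  (a.1 && b.1, a.2.1 && b.2.1, a.2.2.1 && b.2.2.1, a.2.2.2 && b.2.2.2)

def tjoin (a b : TV) : TV :=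
  (a.1 || b.1, a.2.1 || b.2.1, a.2.2.1 || b.2.2.1, a.2.2.2 || b.2.2.2)

/-- da Costa negation. -/
def tneg (a : TV) : TV := if a = ttop then tbot else ttop

/-- Residual implication. -/
def timp (a b : TV) : TV := if tle a b then ttop else b

/-- Infimum of a Boolean sequence. -/
noncomputable def bInf (f : ℕ → Bool) : Bool :=
  @decide (∀ i, f i = true) (Classical.propDecidable _)

/-- Supremum of a Boolean sequence. -/
noncomputable def bSup (f : ℕ → Bool) : Bool :=
  @decide (∃ i, f i = true) (Classical.propDecidable _)

/-- Bounded infimum over `i < n`. -/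
noncomputable def bInfLt (n : ℕ) (f : ℕ → Bool) : Bool :=
  @decide (∀ i, i < n → f i = true) (Classical.propDecidable _)

/-- Bounded supremum over `i < n`. -/
noncomputable def bSupLt (n : ℕ) (f : ℕ → Bool) : Bool :=
  @decide (∃ i, i < n ∧ f i = true) (Classical.propDecidable _)

/-- Suffix of an infinite word. -/
def suffix {P : Type} (σ : ℕ → Set P) (i : ℕ) : ℕ → Set P := fun j => σ (i + j)

/-- rLTL(□,◇) formulas. -/
inductive RFormula (P : Type) : Type where
  | atom : P → RFormula P
  | not : RFormula P → RFormula P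
  | and : RFormula P → RFormula P → RFormula P
  | or : RFormula P → RFormula P → RFormula P
  | imp : RFormula P → RFormula P → RFormula P
  | always : RFormula P → RFormula P
  | eventually : RFormula P → RFormula P
  deriving DecidableEq

open scoped Classical in
/-- The 5-valued rLTL semantics. -/
noncomputable def rV {P : Type} : RFormula P → (ℕ → Set P) → TV
  | .atom p, σ => if p ∈ σ 0 then ttop else tbot
  | .not φ, σ => tneg (rV φ σ)
  | .and φ ψ, σ => tmeet (rV φ σ) (rV ψ σ)
  | .or φ ψ, σ => tjoin (rV φ σ) (rV ψ σ)
  | .imp φ ψ, σ => timp (rV φ σ) (rV ψ σ)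
  | .always φ, σ =>
      (bInf fun i => (rV φ (suffix σ i)).1,
       bSup fun j => bInf fun i => (rV φ (suffix σ (j + i))).2.1,
       bInf fun j => bSup fun i => (rV φ (suffix σ (j + i))).2.2.1,
       bSup fun i => (rV φ (suffix σ i)).2.2.2)
  | .eventually φ, σ =>
      (bSup fun i => (rV φ (suffix σ i)).1,
       bSup fun i => (rV φ (suffix σ i)).2.1,
       bSup fun i => (rV φ (suffix σ i)).2.2.1,
       bSup fun i => (rV φ (suffix σ i)).2.2.2)

/-- Projection onto the k-th component. -/
def comp : Fin 4 → TV → Bool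
  | 0, a => a.1
  | 1, a => a.2.1
  | 2, a => a.2.2.1
  | 3, a => a.2.2.2

/-- LTL(□,◇) formulas, built from atomic propositions by ¬, ∨, □, ◇. -/
inductive LFormula (P : Type) : Type where
  | atom : P → LFormula P
  | not : LFormula P → LFormula P
  | or : LFormula P → LFormula P → LFormula P
  | always : LFormula P → LFormula P
  | eventually : LFormula P → LFormula P

/-- Derived conjunction. -/
def LFormula.and {P : Type} (φ ψ : LFormula P) : LFormula P :=
  .not (.or (.not φ) (.not ψ))

/-- Derived implication. -/
def LFormula.imp {P : Type} (φ ψ : LFormula P) : LFormula P :=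
  .or (.not φ) ψ

open scoped Classical in
/-- The standard Boolean LTL semantics. -/
noncomputable def lW {P : Type} : LFormula P → (ℕ → Set P) → Bool
  | .atom p, σ => if p ∈ σ 0 then true else false
  | .not φ, σ => !(lW φ σ)
  | .or φ ψ, σ => lW φ σ || lW ψ σ
  | .always φ, σ => bInf fun i => lW φ (suffix σ i)
  | .eventually φ, σ => bSup fun i => lW φ (suffix σ i)
section Aux

lemma bInf_eq_true {f : ℕ → Bool} : bInf f = true ↔ ∀ i, f i = true := by
  unfold bInf; exact @decide_eq_true_iff _ (Classical.propDecidable _)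

lemma bSup_eq_true {f : ℕ → Bool} : bSup f = true ↔ ∃ i, f i = true := by
  unfold bSup; exact @decide_eq_true_iff _ (Classical.propDecidable _)

lemma bool_le {a b : Bool} (h : a = true → b = true) : a ≤ b := by
  cases a
  · exact Bool.false_le b
  · exact le_of_eq (h rfl).symm

lemma bool_le_imp {a b : Bool} (h : a ≤ b) (ha : a = true) : b = true := by
  subst ha; cases b
  · exact absurd h (by decide)
  · rfl

/-- Monotone 4-tuples (elements of B₄). -/
def tmono (a : TV) : Prop := a.1 ≤ a.2.1 ∧ a.2.1 ≤ a.2.2.1 ∧ a.2.2.1 ≤ a.2.2.2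

instance : DecidablePred tmono := fun a =>
  decidable_of_iff (a.1 ≤ a.2.1 ∧ a.2.1 ≤ a.2.2.1 ∧ a.2.2.1 ≤ a.2.2.2) Iff.rfl

lemma comp_zero : ∀ a : TV, comp 0 a = a.1 := by decide
lemma comp_one : ∀ a : TV, comp 1 a = a.2.1 := by decide
lemma comp_two : ∀ a : TV, comp 2 a = a.2.2.1 := by decide
lemma comp_three : ∀ a : TV, comp 3 a = a.2.2.2 := by decide

lemma comp_tneg : ∀ (j : Fin 4) (a : TV), tmono a → comp j (tneg a) = !a.1 := by decide

lemma comp_tmeet : ∀ (j : Fin 4) (a b : TV), comp j (tmeet a b) = (comp j a && comp j b) := by decide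

lemma comp_tjoin : ∀ (j : Fin 4) (a b : TV), comp j (tjoin a b) = (comp j a || comp j b) := by decide

lemma comp_timp : ∀ (j : Fin 4) (a b : TV), comp j (timp a b) =
    (((!a.1 || b.1) && ((!a.2.1 || b.2.1) && ((!a.2.2.1 || b.2.2.1) && (!a.2.2.2 || b.2.2.2)))) || comp j b) := by decide

lemma tmono_tneg : ∀ a : TV, tmono (tneg a) := by decide
lemma tmono_tmeet : ∀ a b : TV, tmono a → tmono b → tmono (tmeet a b) := by decide
lemma tmono_tjoin : ∀ a b : TV, tmono a → tmono b → tmono (tjoin a b) := by decide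
lemma tmono_timp : ∀ a b : TV, tmono b → tmono (timp a b) := by decide

lemma suffix_suffix {P : Type} (σ : ℕ → Set P) (j i : ℕ) :
    suffix (suffix σ j) i = suffix σ (j + i) :=
  funext fun k => by simp [suffix, Nat.add_assoc]

lemma rV_tmono {P : Type} : ∀ (φ : RFormula P) (σ : ℕ → Set P), tmono (rV φ σ) := by
  intro φ
  induction φ with
  | atom p => intro σ; unfold rV; split <;> decide
  | not φ ih => intro σ; exact tmono_tneg _
  | and φ ψ ih1 ih2 => intro σ; exact tmono_tmeet _ _ (ih1 σ) (ih2 σ)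
  | or φ ψ ih1 ih2 => intro σ; exact tmono_tjoin _ _ (ih1 σ) (ih2 σ)
  | imp φ ψ ih1 ih2 => intro σ; exact tmono_timp _ _ (ih2 σ)
  | always φ ih =>
      intro σ
      simp only [rV]
      refine ⟨?_, ?_, ?_⟩
      · apply bool_le; intro h
        rw [bSup_eq_true]
        exact ⟨0, bInf_eq_true.mpr fun i =>
          bool_le_imp (ih (suffix σ (0 + i))).1 (bInf_eq_true.mp h (0 + i))⟩
      · apply bool_le; intro h
        rw [bSup_eq_true] at h
        obtain ⟨j, hj⟩ := h
        rw [bInf_eq_true]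
        intro j'
        rw [bSup_eq_true]
        refine ⟨j, ?_⟩
        have := bInf_eq_true.mp hj j'
        rw [Nat.add_comm j' j]
        exact bool_le_imp (ih (suffix σ (j + j'))).2.1 this
      · apply bool_le; intro h
        have h0 := bInf_eq_true.mp h 0
        rw [bSup_eq_true] at h0 ⊢
        obtain ⟨i, hi⟩ := h0
        exact ⟨0 + i, bool_le_imp (ih (suffix σ (0 + i))).2.2 hi⟩
  | eventually φ ih =>
      intro σ
      simp only [rV]
      refine ⟨?_, ?_, ?_⟩ <;>
      · apply bool_le; intro h
        rw [bSup_eq_true] at h ⊢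
        obtain ⟨i, hi⟩ := h
        first
        | exact ⟨i, bool_le_imp (ih (suffix σ i)).1 hi⟩
        | exact ⟨i, bool_le_imp (ih (suffix σ i)).2.1 hi⟩
        | exact ⟨i, bool_le_imp (ih (suffix σ i)).2.2 hi⟩

end Aux
section Main

/-- Translation of rLTL formulas into LTL formulas, one per component. -/
def rT {P : Type} : RFormula P → Fin 4 → LFormula P
  | .atom p, _ => .atom p
  | .not φ, _ => .not (rT φ 0)
  | .and φ ψ, j => .and (rT φ j) (rT ψ j)
  | .or φ ψ, j => .or (rT φ j) (rT ψ j)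
  | .imp φ ψ, j =>
      .or ((LFormula.imp (rT φ 0) (rT ψ 0)).and
            ((LFormula.imp (rT φ 1) (rT ψ 1)).and
              ((LFormula.imp (rT φ 2) (rT ψ 2)).and
                (LFormula.imp (rT φ 3) (rT ψ 3)))))
          (rT ψ j)
  | .always φ, ⟨0, _⟩ => .always (rT φ 0)
  | .always φ, ⟨1, _⟩ => .eventually (.always (rT φ 1))
  | .always φ, ⟨2, _⟩ => .always (.eventually (rT φ 2))
  | .always φ, ⟨_+3, _⟩ => .eventually (rT φ 3)
  | .eventually φ, j => .eventually (rT φ j)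

lemma lW_and {P : Type} (φ ψ : LFormula P) (σ : ℕ → Set P) :
    lW (φ.and ψ) σ = (lW φ σ && lW ψ σ) := by
  simp [LFormula.and, lW]

lemma lW_imp {P : Type} (φ ψ : LFormula P) (σ : ℕ → Set P) :
    lW (φ.imp ψ) σ = (!(lW φ σ) || lW ψ σ) := by
  simp [LFormula.imp, lW]

lemma comp_rV {P : Type} :
    ∀ (φ : RFormula P) (j : Fin 4) (σ : ℕ → Set P), comp j (rV φ σ) = lW (rT φ j) σ := by
  intro φ
  induction φ with
  | atom p =>
      intro j σ
      by_cases h : p ∈ σ 0 <;> simp only [rV, rT, lW, h, if_true, if_false] <;>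
        fin_cases j <;> rfl
  | not φ ih =>
      intro j σ
      simp only [rV, rT, lW]
      rw [comp_tneg j _ (rV_tmono φ σ), ← comp_zero, ih 0 σ]
  | and φ ψ ih1 ih2 =>
      intro j σ
      simp only [rV, rT]
      rw [comp_tmeet, ih1, ih2, lW_and]
  | or φ ψ ih1 ih2 =>
      intro j σ
      simp only [rV, rT, lW]
      rw [comp_tjoin, ih1, ih2]
  | imp φ ψ ih1 ih2 =>
      intro j σ
      simp only [rV, rT, lW]
      have a0 : (rV φ σ).1 = lW (rT φ 0) σ := by rw [← ih1 0 σ, comp_zero]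
      have a1 : (rV φ σ).2.1 = lW (rT φ 1) σ := by rw [← ih1 1 σ, comp_one]
      have a2 : (rV φ σ).2.2.1 = lW (rT φ 2) σ := by rw [← ih1 2 σ, comp_two]
      have a3 : (rV φ σ).2.2.2 = lW (rT φ 3) σ := by rw [← ih1 3 σ, comp_three]
      have b0 : (rV ψ σ).1 = lW (rT ψ 0) σ := by rw [← ih2 0 σ, comp_zero]
      have b1 : (rV ψ σ).2.1 = lW (rT ψ 1) σ := by rw [← ih2 1 σ, comp_one]
      have b2 : (rV ψ σ).2.2.1 = lW (rT ψ 2) σ := by rw [← ih2 2 σ, comp_two]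
      have b3 : (rV ψ σ).2.2.2 = lW (rT ψ 3) σ := by rw [← ih2 3 σ, comp_three]
      rw [comp_timp, a0, a1, a2, a3, b0, b1, b2, b3, ih2 j σ]
      simp only [lW_and, lW_imp, Bool.not_or, Bool.not_and, Bool.not_not, Bool.and_assoc]
  | always φ ih =>
      intro j σ
      fin_cases j
      · show bInf _ = lW (.always (rT φ 0)) σ
        simp only [lW]
        exact congrArg bInf (funext fun i => by rw [← comp_zero, ih 0])
      · show bSup _ = lW (.eventually (.always (rT φ 1))) σ
        simp only [lW]
        refine congrArg bSup (funext fun j => congrArg bInf (funext fun i => ?_))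
        rw [suffix_suffix, ← comp_one, ih 1]
      · show bInf _ = lW (.always (.eventually (rT φ 2))) σ
        simp only [lW]
        refine congrArg bInf (funext fun j => congrArg bSup (funext fun i => ?_))
        rw [suffix_suffix, ← comp_two, ih 2]
      · show bSup _ = lW (.eventually (rT φ 3)) σ
        simp only [lW]
        exact congrArg bSup (funext fun i => by rw [← comp_three, ih 3])
  | eventually φ ih =>
      intro j σ
      fin_cases j
      · show bSup _ = lW (.eventually (rT φ 0)) σ
        simp only [lW]
        exact congrArg bSup (funext fun i => by rw [← comp_zero, ih 0])
      · show bSup _ = lW (.eventually (rT φ 1)) σ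
        simp only [lW]
        exact congrArg bSup (funext fun i => by rw [← comp_one, ih 1])
      · show bSup _ = lW (.eventually (rT φ 2)) σ
        simp only [lW]
        exact congrArg bSup (funext fun i => by rw [← comp_two, ih 2])
      · show bSup _ = lW (.eventually (rT φ 3)) σ
        simp only [lW]
        exact congrArg bSup (funext fun i => by rw [← comp_three, ih 3])

/-- Embedding of LTL formulas into rLTL formulas. -/
def lE {P : Type} : LFormula P → RFormula P
  | .atom p => .atom p
  | .not φ => .not (lE φ)
  | .or φ ψ => .or (lE φ) (lE ψ)
  | .always φ => .always (lE φ)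
  | .eventually φ => .eventually (lE φ)

lemma lW_lE {P : Type} : ∀ (ψ : LFormula P) (σ : ℕ → Set P), lW ψ σ = (rV (lE ψ) σ).1 := by
  intro ψ
  induction ψ with
  | atom p => intro σ; simp only [lW, lE, rV]; split <;> rfl
  | not φ ih =>
      intro σ
      simp only [lW, lE, rV]
      rw [← comp_zero, comp_tneg 0 _ (rV_tmono (lE φ) σ), ih]
  | or φ ψ ih1 ih2 =>
      intro σ
      simp only [lW, lE, rV, tjoin]
      rw [ih1, ih2]
  | always φ ih =>
      intro σ
      simp only [lW, lE, rV]
      exact congrArg bInf (funext fun i => ih _)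
  | eventually φ ih =>
      intro σ
      simp only [lW, lE, rV]
      exact congrArg bSup (funext fun i => ih _)

end Main


/-- LTL(□,◇) and rLTL(□,◇) are equally expressive: every component of the
rLTL semantics of an rLTL(□,◇) formula is the LTL semantics of some LTL(□,◇) formula, and
conversely the LTL semantics of every LTL(□,◇) formula is the first component of the rLTL
semantics of some rLTL(□,◇) formula. -/
theorem rLTL_LTL_equally_expressive {P : Type} :
    (∀ (φ : RFormula P) (j : Fin 4), ∃ ψ : LFormula P,
      ∀ σ : ℕ → Set P, comp j (rV φ σ) = lW ψ σ)
    ∧ (∀ ψ : LFormula P, ∃ φ : RFormula P,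
      ∀ σ : ℕ → Set P, lW ψ σ = (rV φ σ).1) := by
  exact ⟨fun φ j => ⟨rT φ j, fun σ => comp_rV φ j σ⟩,
         fun ψ => ⟨lE ψ, fun σ => lW_lE ψ σ⟩⟩
end

section
/- For every atomic proposition p ∈ 𝒫 and every infinite word σ over 2^𝒫: V(σ,□·◇·p) = (W(σ,□◇p), W(σ,□◇p), W(σ,□◇p), W(σ,◇p)). In particular, V(σ,□·◇·p) can only take the three values 1111 (when □◇p holds on σ), 0001 (when ◇p holds but □◇p does not), and 0000 (when ◇p fails). -/
lemma bSup_true_iff (f : ℕ → Bool) : bSup f = true ↔ ∃ i, f i = true := by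
  unfold bSup; exact @decide_eq_true_iff _ (Classical.propDecidable _)

lemma bInf_true_iff (f : ℕ → Bool) : bInf f = true ↔ ∀ i, f i = true := by
  unfold bInf; exact @decide_eq_true_iff _ (Classical.propDecidable _)

/-- For every atomic proposition `p` and infinite word `σ`:
`V(σ,□◇p) = (W(σ,□◇p), W(σ,□◇p), W(σ,□◇p), W(σ,◇p))`; in particular `V(σ,□◇p)` can only
take the values `1111` (when `□◇p` holds on `σ`), `0001` (when `◇p` holds but `□◇p` does
not), and `0000` (when `◇p` fails). -/
theorem robust_GF_on_atom {P : Type} (p : P) (σ : ℕ → Set P) :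
    rV (.always (.eventually (.atom p))) σ =
      (lW (.always (.eventually (.atom p))) σ,
       lW (.always (.eventually (.atom p))) σ,
       lW (.always (.eventually (.atom p))) σ,
       lW (.eventually (.atom p)) σ)
    ∧ (rV (.always (.eventually (.atom p))) σ = ttop
        ↔ lW (.always (.eventually (.atom p))) σ = true)
    ∧ (rV (.always (.eventually (.atom p))) σ = (false, false, false, true)
        ↔ (lW (.eventually (.atom p)) σ = true
            ∧ lW (.always (.eventually (.atom p))) σ = false))
    ∧ (rV (.always (.eventually (.atom p))) σ = tbot
        ↔ lW (.eventually (.atom p)) σ = false) := by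
  classical
  set G := lW (.always (.eventually (.atom p))) σ with hGdef
  set E := lW (.eventually (.atom p)) σ with hEdef
  have hE : E = true ↔ ∃ i, p ∈ σ i := by
    rw [hEdef]
    show bSup _ = true ↔ _
    rw [bSup_true_iff]
    constructor
    · rintro ⟨i, hi⟩
      simp only [lW] at hi
      split at hi
      · exact ⟨i + 0, by assumption⟩
      · simp at hi
    · rintro ⟨i, hi⟩
      refine ⟨i, ?_⟩
      simp only [lW]
      rw [if_pos]
      simpa [suffix] using hi
  have hG : G = true ↔ ∀ j, ∃ i, p ∈ σ (j + i) := by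
    rw [hGdef]
    show bInf _ = true ↔ _
    rw [bInf_true_iff]
    apply forall_congr'
    intro j
    show bSup _ = true ↔ _
    rw [bSup_true_iff]
    constructor
    · rintro ⟨i, hi⟩
      simp only [lW] at hi
      split at hi
      · exact ⟨i + 0, by assumption⟩
      · simp at hi
    · rintro ⟨i, hi⟩
      refine ⟨i, ?_⟩
      simp only [lW]
      rw [if_pos]
      simpa [suffix] using hi
  have hfst : ∀ τ : ℕ → Set P,
      (rV (.eventually (.atom p)) τ) =
        (decide (∃ i, p ∈ τ i), decide (∃ i, p ∈ τ i),
         decide (∃ i, p ∈ τ i), decide (∃ i, p ∈ τ i)) := by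
    intro τ
    have key : ∀ g : TV → Bool, g ttop = true → g tbot = false →
        (bSup fun i => g (if p ∈ τ (i + 0) then ttop else tbot)) = decide (∃ i, p ∈ τ i) := by
      intro g hgt hgb
      rw [Bool.eq_iff_iff, bSup_true_iff, decide_eq_true_iff]
      constructor
      · rintro ⟨i, hi⟩
        by_cases h : p ∈ τ (i + 0)
        · exact ⟨i + 0, h⟩
        · rw [if_neg h, hgb] at hi; simp at hi
      · rintro ⟨i, hi⟩
        refine ⟨i, ?_⟩
        rw [if_pos (by simpa using hi), hgt]
    simp only [rV, suffix]
    refine Prod.ext ?_ (Prod.ext ?_ (Prod.ext ?_ ?_)) <;>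
      simp only [] <;>
      [exact key (fun a => a.1) rfl rfl;
       exact key (fun a => a.2.1) rfl rfl;
       exact key (fun a => a.2.2.1) rfl rfl;
       exact key (fun a => a.2.2.2) rfl rfl]
  have hmain : rV (.always (.eventually (.atom p))) σ = (G, G, G, E) := by
    show (bInf _, bSup _, bInf _, bSup _) = _
    refine Prod.ext ?_ (Prod.ext ?_ (Prod.ext ?_ ?_))
    · -- first component = G
      simp only []
      rw [Bool.eq_iff_iff, bInf_true_iff, hG]
      apply forall_congr'
      intro j
      rw [hfst (suffix σ j)]
      simp only [decide_eq_true_iff] <;> simp only [suffix]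
    · -- second component = G
      simp only []
      rw [Bool.eq_iff_iff, bSup_true_iff, hG]
      constructor
      · rintro ⟨j, hj⟩
        rw [bInf_true_iff] at hj
        intro m
        have := hj m
        rw [hfst (suffix σ (j + m))] at this
        simp only [decide_eq_true_iff] at this; simp only [suffix] at this
        obtain ⟨k, hk⟩ := this
        exact ⟨j + k, by rw [show m + (j + k) = j + m + k by omega]; exact hk⟩
      · intro h
        refine ⟨0, ?_⟩
        rw [bInf_true_iff]
        intro i
        rw [hfst (suffix σ (0 + i))]
        simp only [decide_eq_true_iff]; simp only [suffix]
        obtain ⟨k, hk⟩ := h i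
        exact ⟨k, by rw [show 0 + i + k = i + k by omega]; exact hk⟩
    · -- third component = G
      simp only []
      rw [Bool.eq_iff_iff, bInf_true_iff, hG]
      constructor
      · intro h j
        have := h j
        rw [bSup_true_iff] at this
        obtain ⟨i, hi⟩ := this
        rw [hfst (suffix σ (j + i))] at hi
        simp only [decide_eq_true_iff] at hi; simp only [suffix] at hi
        obtain ⟨k, hk⟩ := hi
        exact ⟨i + k, by rw [show j + (i + k) = j + i + k by omega]; exact hk⟩
      · intro h j
        rw [bSup_true_iff]
        obtain ⟨i, hi⟩ := h j
        refine ⟨i, ?_⟩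
        rw [hfst (suffix σ (j + i))]
        simp only [decide_eq_true_iff]; simp only [suffix]
        exact ⟨0, by rw [show j + i + 0 = j + i by omega]; exact hi⟩
    · -- fourth component = E
      simp only []
      rw [Bool.eq_iff_iff, bSup_true_iff, hE]
      constructor
      · rintro ⟨i, hi⟩
        rw [hfst (suffix σ i)] at hi
        simp only [decide_eq_true_iff] at hi; simp only [suffix] at hi
        obtain ⟨k, hk⟩ := hi
        exact ⟨i + k, hk⟩
      · rintro ⟨i, hi⟩
        refine ⟨0, ?_⟩
        rw [hfst (suffix σ 0)]
        simp only [decide_eq_true_iff]; simp only [suffix]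
        exact ⟨i, by simpa using hi⟩
  have hGE : G = true → E = true := by
    intro h
    rw [hE]
    obtain ⟨i, hi⟩ := hG.mp h 0
    exact ⟨0 + i, hi⟩
  refine ⟨hmain, ?_, ?_, ?_⟩ <;> rw [hmain] <;>
    cases hg : G <;> cases he : E <;>
    simp_all [ttop, tbot, Prod.ext_iff]
end
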